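/- arXiv:2412.00376 — 3 statements merged into one kernel-verified Lean document; each statement's English description precedes it below -/
import Mathlib

section
/- Assume θ₁ = 1, q = κ₁ and b/η₁ < κ₂/(κ₁ + 1 − θ₂). Then there exist constants β, ρ, σ₀, ε₀, z* > 0 and 0 < δ < β^{−1} such that for all 0 < σ < σ₀ and all x, y with 0 < x, y ≤ ε₀ and y x^{−β} ≥ z*, one has H̃_σ(x,y) > 0. -/
open Real

set_option maxHeartbeats 1000000 in
/-- Lemma 3.11 (case (iid)): there exist `β, ρ, σ₀, ε₀, z* > 0` and `0 < δ < β⁻¹`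
such that for all `0 < σ < σ₀`, `0 < x, y ≤ ε₀` with `y x^(−β) ≥ z*`, one has
`H̃_σ(x,y) := δ x^(βδ) y^(−δ) [βa(1−σ)x^p − (1+σ)b y^q + βη₁ x^(θ₁−1) y^(κ₁)
  − η₂ y^(θ₂−1) x^(κ₂)] + bρ(1−σ) y^(ρ+q) + ρη₂ y^(ρ+θ₂−1) x^(κ₂) > 0`. -/
theorem Htilde_pos_case_iid (a b η₁ η₂ κ₁ κ₂ p q θ₁ θ₂ : ℝ)
    (ha : 0 < a) (hb : 0 < b) (hη₁ : 0 < η₁) (hη₂ : 0 < η₂)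
    (hκ₁ : 0 < κ₁) (hκ₂ : 0 < κ₂) (hp : 0 ≤ p) (hq : 0 ≤ q)
    (hθ₁ : 1 ≤ θ₁) (hθ₂ : 0 ≤ θ₂) (hθ₂' : θ₂ < 1)
    (hθ₁eq : θ₁ = 1) (hqκ : q = κ₁) (hcond : b / η₁ < κ₂ / (κ₁ + 1 - θ₂)) :
    ∃ β ρ σ₀ ε₀ zstar δ : ℝ,
      0 < β ∧ 0 < ρ ∧ 0 < σ₀ ∧ 0 < ε₀ ∧ 0 < zstar ∧ 0 < δ ∧ δ < β⁻¹ ∧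
      ∀ σ : ℝ, 0 < σ → σ < σ₀ → ∀ x y : ℝ,
        0 < x → x ≤ ε₀ → 0 < y → y ≤ ε₀ → y * x ^ (-β) ≥ zstar →
        0 < δ * (x ^ (β * δ) * y ^ (-δ)) *
              (β * a * (1 - σ) * x ^ p - (1 + σ) * b * y ^ q
                + β * η₁ * x ^ (θ₁ - 1) * y ^ κ₁ - η₂ * y ^ (θ₂ - 1) * x ^ κ₂)
            + b * ρ * (1 - σ) * y ^ (ρ + q) + ρ * η₂ * y ^ (ρ + θ₂ - 1) * x ^ κ₂ := by
  have hs : 0 < κ₁ + 1 - θ₂ := by linarith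
  set s : ℝ := κ₁ + 1 - θ₂ with hsdef
  set β : ℝ := κ₂ / s with hβdef
  have hβ : 0 < β := div_pos hκ₂ hs
  have hbβ : b < β * η₁ := by
    rw [div_lt_div_iff₀ hη₁ hs] at hcond
    rw [hβdef, div_mul_eq_mul_div, lt_div_iff₀ hs]
    linarith
  set m : ℝ := β * η₁ - b with hmdef
  have hm : 0 < m := by linarith
  set σ₀ : ℝ := min 1 (m / (2 * b)) with hσ₀def
  have hσ₀ : 0 < σ₀ := lt_min one_pos (div_pos hm (by linarith))
  set M : ℝ := max 1 (2 * η₂ / m) with hMdef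
  have hM1 : (1 : ℝ) ≤ M := le_max_left _ _
  have hMpos : 0 < M := lt_of_lt_of_le one_pos hM1
  set zstar : ℝ := M ^ (1 / s) with hzdef
  have hz : 0 < zstar := Real.rpow_pos_of_pos hMpos _
  have hzs : zstar ^ s = M := by
    rw [hzdef, ← Real.rpow_mul hMpos.le, one_div, inv_mul_cancel₀ hs.ne', Real.rpow_one]
  refine ⟨β, 1, σ₀, 1, zstar, β⁻¹ / 2, hβ, one_pos, hσ₀, one_pos, hz, by positivity,
    by
      have := inv_pos.mpr hβ
      linarith, ?_⟩
  intro σ hσ hσσ₀ x y hx hx1 hy hy1 hyx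
  have h1σ : 1 - σ > 0 := by
    have : σ < 1 := lt_of_lt_of_le hσσ₀ (min_le_left _ _)
    linarith
  have hσm : σ ≤ m / (2 * b) := le_of_lt (lt_of_lt_of_le hσσ₀ (min_le_right _ _))
  have hσb : σ * (2 * b) ≤ m := by
    rw [← le_div_iff₀ (by linarith : (0:ℝ) < 2 * b)]; exact hσm
  -- x^β ≤ y / zstar
  have hxβ : x ^ β * zstar ≤ y := by
    have h0 : x ^ β * (y * x ^ (-β)) = y := by
      rw [mul_comm y, ← mul_assoc, ← Real.rpow_add hx]
      simp
    calc x ^ β * zstar ≤ x ^ β * (y * x ^ (-β)) :=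
          mul_le_mul_of_nonneg_left hyx (Real.rpow_nonneg hx.le _)
      _ = y := h0
  -- x^κ₂ ≤ y^s / M
  have hβs : β * s = κ₂ := div_mul_cancel₀ κ₂ hs.ne'
  have hxκ : x ^ κ₂ ≤ y ^ s / M := by
    have h1 : x ^ κ₂ = (x ^ β) ^ s := by
      rw [← Real.rpow_mul hx.le, hβs]
    have h2 : (x ^ β) ^ s ≤ (y / zstar) ^ s := by
      apply Real.rpow_le_rpow (Real.rpow_nonneg hx.le _) _ hs.le
      rw [le_div_iff₀ hz]; exact hxβ
    have h3 : (y / zstar) ^ s = y ^ s / M := by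
      rw [Real.div_rpow hy.le hz.le, hzs]
    rw [h1]; rw [h3] at h2; exact h2
  -- key2 : η₂ * y^(θ₂-1) * x^κ₂ ≤ (m/2) * y^κ₁
  have hyθ : (0:ℝ) < y ^ (θ₂ - 1) := Real.rpow_pos_of_pos hy _
  have hys : (0:ℝ) < y ^ s := Real.rpow_pos_of_pos hy _
  have hMge : 2 * η₂ / m ≤ M := le_max_right _ _
  have hinvM : M⁻¹ ≤ m / (2 * η₂) := by
    rw [← inv_div (2 * η₂) m] at *
    have h2ηm : 0 < 2 * η₂ / m := div_pos (by linarith) hm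
    exact inv_anti₀ h2ηm hMge
  have key2 : η₂ * y ^ (θ₂ - 1) * x ^ κ₂ ≤ m / 2 * y ^ κ₁ := by
    have step1 : η₂ * y ^ (θ₂ - 1) * x ^ κ₂ ≤ η₂ * y ^ (θ₂ - 1) * (y ^ s / M) :=
      mul_le_mul_of_nonneg_left hxκ (by positivity)
    have step2 : η₂ * y ^ (θ₂ - 1) * (y ^ s / M) ≤ η₂ * y ^ (θ₂ - 1) * (y ^ s * (m / (2 * η₂))) := by
      apply mul_le_mul_of_nonneg_left _ (by positivity)
      rw [div_eq_mul_inv]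
      exact mul_le_mul_of_nonneg_left hinvM hys.le
    have step3 : η₂ * y ^ (θ₂ - 1) * (y ^ s * (m / (2 * η₂))) = m / 2 * y ^ κ₁ := by
      have hyy : y ^ (θ₂ - 1) * y ^ s = y ^ κ₁ := by
        rw [← Real.rpow_add hy]
        congr 1
        rw [hsdef]; ring
      field_simp
      linear_combination hyy
    linarith
  -- bracket ≥ 0
  have hyκ : (0:ℝ) < y ^ κ₁ := Real.rpow_pos_of_pos hy _
  have hxθ : x ^ (θ₁ - 1) = 1 := by
    rw [hθ₁eq]; simp
  have key1 : (1 + σ) * b * y ^ q ≤ (b + m / 2) * y ^ κ₁ := by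
    rw [hqκ]
    apply mul_le_mul_of_nonneg_right _ hyκ.le
    nlinarith
  have hxp : (0:ℝ) < x ^ p := Real.rpow_pos_of_pos hx _
  have hbracket : 0 ≤ β * a * (1 - σ) * x ^ p - (1 + σ) * b * y ^ q
      + β * η₁ * x ^ (θ₁ - 1) * y ^ κ₁ - η₂ * y ^ (θ₂ - 1) * x ^ κ₂ := by
    rw [hxθ, mul_one]
    have hA : 0 ≤ β * a * (1 - σ) * x ^ p := by positivity
    have hbm : β * η₁ * y ^ κ₁ = (b + m) * y ^ κ₁ := by rw [hmdef]; ring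
    rw [hqκ] at key1 ⊢
    linarith [key1, key2, hA, hbm]
  have hδpos : (0:ℝ) < β⁻¹ / 2 := by positivity
  have hfac : (0:ℝ) < x ^ (β * (β⁻¹ / 2)) * y ^ (-(β⁻¹ / 2)) := by positivity
  have hT1 : 0 ≤ (β⁻¹ / 2) * (x ^ (β * (β⁻¹ / 2)) * y ^ (-(β⁻¹ / 2))) *
      (β * a * (1 - σ) * x ^ p - (1 + σ) * b * y ^ q
        + β * η₁ * x ^ (θ₁ - 1) * y ^ κ₁ - η₂ * y ^ (θ₂ - 1) * x ^ κ₂) :=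
    mul_nonneg (by positivity) hbracket
  have hT2 : (0:ℝ) < b * 1 * (1 - σ) * y ^ (1 + q) := by positivity
  have hT3 : (0:ℝ) < 1 * η₂ * y ^ (1 + θ₂ - 1) * x ^ κ₂ := by positivity
  linarith
end

section
/- Assume θ₁ − 1 > κ₂(q − κ₁)/(q + 1 − θ₂) and p > κ₂ q/(q + 1 − θ₂). Then there exist constants r, ε ∈ (0,1), β > 0 and c₀ > 0 such that H(x,y) ≥ c₀ for all x, y with 0 < x, y < ε. -/
open Real

private lemma rpow_comb {x y : ℝ} (hx : 0 < x) (hy : 0 < y) {c : ℝ} (hc : 0 ≤ c) (u v w : ℝ) :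
    (c * (x ^ u * y ^ v)) ^ w = c ^ w * (x ^ (u * w) * y ^ (v * w)) := by
  rw [Real.mul_rpow hc (by positivity), Real.mul_rpow (by positivity) (by positivity),
    Real.rpow_mul hx.le, Real.rpow_mul hy.le]

set_option maxHeartbeats 1000000 in
/-- Lemma 3.13 (case (iiia)): under the stated conditions there exist constants
`r, ε ∈ (0,1)`, `β > 0` and `c₀ > 0` such that `H(x,y) ≥ c₀` for all `0 < x, y < ε`,
where, writing `u := x^(−β) y`,
`H(x,y) := b(r) u^r y^q + η₂ u^r y^(θ₂−1) x^(κ₂) − a(r) β u^r x^p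
  − η₁ β u^r x^(θ₁−1) y^(κ₁)`,
with `a(r)`, `b(r)` the `r`-dependent coefficients built from the Gamma function,
and `p, q, a, b` the minimal exponents and associated coefficients. -/
theorem H_lower_bound_case_iiia (α₁ α₂ a₁ a₂ a₃ b₁ b₂ b₃ p₁ p₂ p₃ q₁ q₂ q₃ η₁ η₂ κ₁ κ₂ θ₁ θ₂ p q a b : ℝ)
    (hα₁ : 1 < α₁) (hα₁' : α₁ < 2) (hα₂ : 1 < α₂) (hα₂' : α₂ < 2)
    (ha₁ : 0 ≤ a₁) (ha₂ : 0 ≤ a₂) (ha₃ : 0 ≤ a₃)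
    (hb₁ : 0 ≤ b₁) (hb₂ : 0 ≤ b₂) (hb₃ : 0 ≤ b₃)
    (ha₂₃ : 0 < a₂ + a₃) (hb₂₃ : 0 < b₂ + b₃)
    (hp₁ : 0 ≤ p₁) (hp₂ : 0 ≤ p₂) (hp₃ : 0 ≤ p₃)
    (hq₁ : 0 ≤ q₁) (hq₂ : 0 ≤ q₂) (hq₃ : 0 ≤ q₃)
    (hη₁ : 0 < η₁) (hη₂ : 0 < η₂) (hκ₁ : 0 < κ₁) (hκ₂ : 0 < κ₂)
    (hθ₁ : 1 ≤ θ₁) (hθ₂ : 0 ≤ θ₂) (hθ₂' : θ₂ < 1)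
    (hpmem : (a₁ ≠ 0 ∧ p = p₁) ∨ (a₂ ≠ 0 ∧ p = p₂) ∨ (a₃ ≠ 0 ∧ p = p₃))
    (hpmin : (a₁ ≠ 0 → p ≤ p₁) ∧ (a₂ ≠ 0 → p ≤ p₂) ∧ (a₃ ≠ 0 → p ≤ p₃))
    (hqmem : (b₁ ≠ 0 ∧ q = q₁) ∨ (b₂ ≠ 0 ∧ q = q₂) ∨ (b₃ ≠ 0 ∧ q = q₃))
    (hqmin : (b₁ ≠ 0 → q ≤ q₁) ∧ (b₂ ≠ 0 → q ≤ q₂) ∧ (b₃ ≠ 0 → q ≤ q₃))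
    (hadef : a = (if p₁ = p then a₁ else 0) + (if p₂ = p then a₂ else 0)
        + (if p₃ = p then a₃ else 0))
    (hbdef : b = (if q₁ = q then b₁ else 0) + (if q₂ = q then b₂ else 0)
        + (if q₃ = q then b₃ else 0))
    (hcond₁ : θ₁ - 1 > κ₂ * (q - κ₁) / (q + 1 - θ₂)) (hcond₂ : p > κ₂ * q / (q + 1 - θ₂)) :
    ∃ r ε β c₀ : ℝ, 0 < r ∧ r < 1 ∧ 0 < ε ∧ ε < 1 ∧ 0 < β ∧ 0 < c₀ ∧
      ∀ x y : ℝ, 0 < x → x < ε → 0 < y → y < ε →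
        ((if q₁ = q then b₁ else 0) + (if q₂ = q then b₂ * (1 - r) else 0)
              + (if q₃ = q then b₃ * ((1 - r) * Real.Gamma (α₂ - r)
                  / (Real.Gamma α₂ * Real.Gamma (2 - r))) else 0))
            * (x ^ (-β) * y) ^ r * y ^ q
          + η₂ * (x ^ (-β) * y) ^ r * y ^ (θ₂ - 1) * x ^ κ₂
          - ((if p₁ = p then a₁ else 0) + (if p₂ = p then a₂ * (r * β + 1) else 0)
              + (if p₃ = p then a₃ * ((r * β + 1) * Real.Gamma (α₁ + r * β)
                  / (Real.Gamma α₁ * Real.Gamma (2 + r * β))) else 0))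
            * β * (x ^ (-β) * y) ^ r * x ^ p
          - η₁ * β * (x ^ (-β) * y) ^ r * x ^ (θ₁ - 1) * y ^ κ₁
        ≥ c₀ := by
  have hq0 : 0 ≤ q := by
    rcases hqmem with ⟨_, h⟩ | ⟨_, h⟩ | ⟨_, h⟩ <;> rw [h] <;> assumption
  have hD : 0 < q + 1 - θ₂ := by linarith only [hq0, hθ₂']
  set r : ℝ := (1 - θ₂) / 2 with hrdef
  have hr0 : 0 < r := by rw [hrdef]; linarith only [hθ₂']
  have hr1 : r < 1 := by rw [hrdef]; linarith only [hθ₂]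
  have h1r : 0 < 1 - r := by linarith only [hr1]
  have hrθ : r + (θ₂ - 1) ≤ 0 := by rw [hrdef]; linarith only [hθ₂']
  set β : ℝ := (κ₂ + 1) / r with hβdef
  have hβ0 : 0 < β := div_pos (by linarith only [hκ₂]) hr0
  have hrβ : r * β = κ₂ + 1 := by rw [hβdef]; field_simp
  set l : ℝ := q / (q + 1 - θ₂) with hldef
  have hl0 : 0 ≤ l := div_nonneg hq0 hD.le
  have hl1 : l ≤ 1 := le_of_lt ((div_lt_one hD).2 (by linarith only [hθ₂']))
  have hlD : l * (q + 1 - θ₂) = q := by rw [hldef]; field_simp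
  set m : ℝ := max ((q - κ₁) / (q + 1 - θ₂)) 0 with hmdef
  have hm0 : 0 ≤ m := le_max_right _ _
  have hm1 : m ≤ 1 := max_le (le_of_lt ((div_lt_one hD).2 (by linarith only [hκ₁, hθ₂']))) zero_le_one
  set e₁ : ℝ := p - l * κ₂ with he₁def
  have he₁ : 0 < e₁ := by
    have hl : l * κ₂ = κ₂ * q / (q + 1 - θ₂) := by rw [hldef]; ring
    rw [he₁def, hl]; linarith only [hcond₂]
  set t : ℝ := θ₁ - 1 - m * κ₂ with htdef
  set s : ℝ := q - m * (q + 1 - θ₂) with hsdef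
  have hts : 0 ≤ t ∧ 0 ≤ κ₁ - s ∧ 0 < t + (κ₁ - s) := by
    rcases le_or_gt κ₁ q with h | h
    · have hm : m = (q - κ₁) / (q + 1 - θ₂) :=
        max_eq_left (div_nonneg (by linarith only [h]) hD.le)
      have hmκ : m * κ₂ < θ₁ - 1 := by
        have h2 : m * κ₂ = κ₂ * (q - κ₁) / (q + 1 - θ₂) := by rw [hm]; ring
        rw [h2]; exact hcond₁
      have hmD : m * (q + 1 - θ₂) = q - κ₁ := by rw [hm]; field_simp
      have hsv : s = κ₁ := by rw [hsdef, hmD]; ring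
      refine ⟨by rw [htdef]; linarith only [hmκ], by rw [hsv]; simp, ?_⟩
      rw [htdef, hsv]; simp only [sub_self, add_zero]; linarith only [hmκ]
    · have hm : m = 0 := max_eq_right (div_nonpos_of_nonpos_of_nonneg (by linarith only [h]) hD.le)
      have hsv : s = q := by rw [hsdef, hm]; ring
      have htv : t = θ₁ - 1 := by rw [htdef, hm]; ring
      exact ⟨by rw [htv]; linarith only [hθ₁], by rw [hsv]; linarith only [h], by rw [htv, hsv]; linarith only [hθ₁, h]⟩
  obtain ⟨ht0, hκs, he₂'⟩ := hts
  set e₂ : ℝ := t + (κ₁ - s) with he₂def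
  have he₂ : 0 < e₂ := he₂'
  -- Gamma positivity
  have hΓα₂ : 0 < Real.Gamma α₂ := Real.Gamma_pos_of_pos (by linarith only [hα₂])
  have hΓα₂r : 0 < Real.Gamma (α₂ - r) := Real.Gamma_pos_of_pos (by rw [hrdef]; linarith only [hα₂, hθ₂])
  have hΓ2r : 0 < Real.Gamma (2 - r) := Real.Gamma_pos_of_pos (by rw [hrdef]; linarith only [hθ₂])
  have hΓα₁ : 0 < Real.Gamma α₁ := Real.Gamma_pos_of_pos (by linarith only [hα₁])
  have hΓa : 0 < Real.Gamma (α₁ + r * β) := Real.Gamma_pos_of_pos (by rw [hrβ]; linarith only [hα₁, hκ₂])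
  have hΓb : 0 < Real.Gamma (2 + r * β) := Real.Gamma_pos_of_pos (by rw [hrβ]; linarith only [hκ₂])
  have hrβ1 : 0 < r * β + 1 := by rw [hrβ]; linarith only [hκ₂]
  set B : ℝ := (if q₁ = q then b₁ else 0) + (if q₂ = q then b₂ * (1 - r) else 0)
      + (if q₃ = q then b₃ * ((1 - r) * Real.Gamma (α₂ - r)
          / (Real.Gamma α₂ * Real.Gamma (2 - r))) else 0) with hBdef
  set A : ℝ := (if p₁ = p then a₁ else 0) + (if p₂ = p then a₂ * (r * β + 1) else 0)
      + (if p₃ = p then a₃ * ((r * β + 1) * Real.Gamma (α₁ + r * β)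
          / (Real.Gamma α₁ * Real.Gamma (2 + r * β))) else 0) with hAdef
  have hB : 0 < B := by
    have n1 : 0 ≤ (if q₁ = q then b₁ else 0) := by split_ifs <;> simp [hb₁]
    have n2 : 0 ≤ (if q₂ = q then b₂ * (1 - r) else 0) := by
      split_ifs; exacts [mul_nonneg hb₂ h1r.le, le_rfl]
    have n3 : 0 ≤ (if q₃ = q then b₃ * ((1 - r) * Real.Gamma (α₂ - r)
        / (Real.Gamma α₂ * Real.Gamma (2 - r))) else 0) := by
      split_ifs
      · exact mul_nonneg hb₃ (div_nonneg (mul_nonneg h1r.le hΓα₂r.le)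
          (mul_nonneg hΓα₂.le hΓ2r.le))
      · exact le_rfl
    rw [hBdef]
    rcases hqmem with ⟨hne, hqe⟩ | ⟨hne, hqe⟩ | ⟨hne, hqe⟩
    · have h : (if q₁ = q then b₁ else 0) = b₁ := if_pos hqe.symm
      have : 0 < b₁ := lt_of_le_of_ne hb₁ (Ne.symm hne)
      rw [h]; linarith only [n2, n3, this]
    · have h : (if q₂ = q then b₂ * (1 - r) else 0) = b₂ * (1 - r) := if_pos hqe.symm
      have : 0 < b₂ * (1 - r) := mul_pos (lt_of_le_of_ne hb₂ (Ne.symm hne)) h1r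
      rw [h]; linarith only [n1, n3, this]
    · have h : (if q₃ = q then b₃ * ((1 - r) * Real.Gamma (α₂ - r)
          / (Real.Gamma α₂ * Real.Gamma (2 - r))) else 0)
          = b₃ * ((1 - r) * Real.Gamma (α₂ - r) / (Real.Gamma α₂ * Real.Gamma (2 - r))) :=
        if_pos hqe.symm
      have : 0 < b₃ * ((1 - r) * Real.Gamma (α₂ - r) / (Real.Gamma α₂ * Real.Gamma (2 - r))) :=
        mul_pos (lt_of_le_of_ne hb₃ (Ne.symm hne))
          (div_pos (mul_pos h1r hΓα₂r) (mul_pos hΓα₂ hΓ2r))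
      rw [h]; linarith only [n1, n2, this]
  have hA : 0 ≤ A := by
    rw [hAdef]
    have n1 : 0 ≤ (if p₁ = p then a₁ else 0) := by split_ifs <;> simp [ha₁]
    have n2 : 0 ≤ (if p₂ = p then a₂ * (r * β + 1) else 0) := by
      split_ifs; exacts [mul_nonneg ha₂ hrβ1.le, le_rfl]
    have n3 : 0 ≤ (if p₃ = p then a₃ * ((r * β + 1) * Real.Gamma (α₁ + r * β)
        / (Real.Gamma α₁ * Real.Gamma (2 + r * β))) else 0) := by
      split_ifs
      · exact mul_nonneg ha₃ (div_nonneg (mul_nonneg hrβ1.le hΓa.le)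
          (mul_nonneg hΓα₁.le hΓb.le))
      · exact le_rfl
    linarith only [n1, n2, n3]
  set K₁ : ℝ := B ^ (1 - l) * η₂ ^ l with hK₁def
  set K₂ : ℝ := B ^ (1 - m) * η₂ ^ m with hK₂def
  have hK₁ : 0 < K₁ := mul_pos (Real.rpow_pos_of_pos hB _) (Real.rpow_pos_of_pos hη₂ _)
  have hK₂ : 0 < K₂ := mul_pos (Real.rpow_pos_of_pos hB _) (Real.rpow_pos_of_pos hη₂ _)
  have hAβ : 0 ≤ A * β := mul_nonneg hA hβ0.le
  have hd₁ : 0 < K₁ + 4 * (A * β) := by linarith only [hK₁, hAβ]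
  have hd₂ : 0 < K₂ + 4 * (η₁ * β) := by have := mul_pos hη₁ hβ0; linarith only [hK₂, this]
  set ε₁ : ℝ := (K₁ / (K₁ + 4 * (A * β))) ^ e₁⁻¹ with hε₁def
  set ε₂ : ℝ := (K₂ / (K₂ + 4 * (η₁ * β))) ^ e₂⁻¹ with hε₂def
  have hε₁pos : 0 < ε₁ := Real.rpow_pos_of_pos (div_pos hK₁ hd₁) _
  have hε₂pos : 0 < ε₂ := Real.rpow_pos_of_pos (div_pos hK₂ hd₂) _
  set ε : ℝ := min (1/2) (min ε₁ ε₂) with hεdef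
  have hε0 : 0 < ε := lt_min (by norm_num) (lt_min hε₁pos hε₂pos)
  have hε1 : ε < 1 := lt_of_le_of_lt (min_le_left _ _) (by norm_num)
  have hbound₁ : A * β * ε ^ e₁ ≤ K₁ / 4 := by
    have h1 : ε ^ e₁ ≤ K₁ / (K₁ + 4 * (A * β)) := by
      calc ε ^ e₁ ≤ ε₁ ^ e₁ :=
            Real.rpow_le_rpow hε0.le (le_trans (min_le_right _ _) (min_le_left _ _)) he₁.le
        _ = K₁ / (K₁ + 4 * (A * β)) :=
            Real.rpow_inv_rpow (le_of_lt (div_pos hK₁ hd₁)) he₁.ne'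
    calc A * β * ε ^ e₁ ≤ A * β * (K₁ / (K₁ + 4 * (A * β))) :=
          mul_le_mul_of_nonneg_left h1 hAβ
      _ ≤ K₁ / 4 := by
          rw [← mul_div_assoc, div_le_div_iff₀ hd₁ (by norm_num)]
          linarith only [sq_nonneg K₁]
  have hbound₂ : η₁ * β * ε ^ e₂ ≤ K₂ / 4 := by
    have h1 : ε ^ e₂ ≤ K₂ / (K₂ + 4 * (η₁ * β)) := by
      calc ε ^ e₂ ≤ ε₂ ^ e₂ :=
            Real.rpow_le_rpow hε0.le (le_trans (min_le_right _ _) (min_le_right _ _)) he₂.le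
        _ = K₂ / (K₂ + 4 * (η₁ * β)) :=
            Real.rpow_inv_rpow (le_of_lt (div_pos hK₂ hd₂)) he₂.ne'
    calc η₁ * β * ε ^ e₂ ≤ η₁ * β * (K₂ / (K₂ + 4 * (η₁ * β))) :=
          mul_le_mul_of_nonneg_left h1 (by positivity)
      _ ≤ K₂ / 4 := by
          rw [← mul_div_assoc, div_le_div_iff₀ hd₂ (by norm_num)]
          linarith only [sq_nonneg K₂]
  refine ⟨r, ε, β, η₂ / 2, hr0, hr1, hε0, hε1, hβ0, by linarith only [hη₂], ?_⟩
  intro x y hx hxε hy hyε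
  rw [← hBdef, ← hAdef]
  have hx1 : x ≤ 1 := le_of_lt (hxε.trans hε1)
  have hy1 : y ≤ 1 := le_of_lt (hyε.trans hε1)
  have hu : (x ^ (-β) * y) ^ r = x ^ (-(κ₂+1)) * y ^ r := by
    have hbr : -β * r = -(κ₂+1) := by rw [← hrβ]; ring
    rw [Real.mul_rpow (by positivity) hy.le, ← Real.rpow_mul hx.le, hbr]
  rw [hu]
  have hT1 : B * (x ^ (-(κ₂+1)) * y ^ r) * y ^ q = B * (x ^ (-(κ₂+1)) * y ^ (r + q)) := by
    rw [Real.rpow_add hy]; ring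
  have hT2 : η₂ * (x ^ (-(κ₂+1)) * y ^ r) * y ^ (θ₂ - 1) * x ^ κ₂
      = η₂ * (x ^ (κ₂ + -(κ₂+1)) * y ^ (r + (θ₂ - 1))) := by
    rw [Real.rpow_add hy, Real.rpow_add hx]; ring
  have hT3 : A * β * (x ^ (-(κ₂+1)) * y ^ r) * x ^ p
      = (A * β) * (x ^ (p + -(κ₂+1)) * y ^ r) := by
    rw [Real.rpow_add hx]; ring
  have hT4 : η₁ * β * (x ^ (-(κ₂+1)) * y ^ r) * x ^ (θ₁ - 1) * y ^ κ₁
      = (η₁ * β) * (x ^ ((θ₁ - 1) + -(κ₂+1)) * y ^ (r + κ₁)) := by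
    rw [Real.rpow_add hx, Real.rpow_add hy]; ring
  rw [hT1, hT2, hT3, hT4]
  set T1 : ℝ := B * (x ^ (-(κ₂+1)) * y ^ (r + q)) with hT1def
  set T2 : ℝ := η₂ * (x ^ (κ₂ + -(κ₂+1)) * y ^ (r + (θ₂ - 1))) with hT2def
  have hT1pos : 0 ≤ T1 := by
    rw [hT1def]; exact mul_nonneg hB.le (by positivity)
  have hT2η : η₂ ≤ T2 := by
    have hx' : 1 ≤ x ^ (κ₂ + -(κ₂+1)) :=
      Real.one_le_rpow_of_pos_of_le_one_of_nonpos hx hx1 (by linarith only [])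
    have hy' : 1 ≤ y ^ (r + (θ₂ - 1)) :=
      Real.one_le_rpow_of_pos_of_le_one_of_nonpos hy hy1 hrθ
    have hp : (1:ℝ) ≤ x ^ (κ₂ + -(κ₂+1)) * y ^ (r + (θ₂ - 1)) := by
      calc (1:ℝ) = 1 * 1 := (one_mul 1).symm
        _ ≤ x ^ (κ₂ + -(κ₂+1)) * y ^ (r + (θ₂ - 1)) :=
            mul_le_mul hx' hy' zero_le_one (by positivity)
    have := mul_le_mul_of_nonneg_left hp hη₂.le
    rw [hT2def]; linarith only [this]
  have hT2pos : 0 ≤ T2 := le_trans hη₂.le hT2η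
  -- geometric means
  have hG₁ : T1 ^ (1 - l) * T2 ^ l = K₁ * (x ^ (l * κ₂ + -(κ₂+1)) * y ^ r) := by
    rw [hT1def, hT2def, rpow_comb hx hy hB.le, rpow_comb hx hy hη₂.le]
    have ex : x ^ (-(κ₂+1) * (1 - l)) * x ^ ((κ₂ + -(κ₂+1)) * l) = x ^ (l * κ₂ + -(κ₂+1)) := by
      rw [← Real.rpow_add hx]; congr 1; ring
    have ey : y ^ ((r + q) * (1 - l)) * y ^ ((r + (θ₂ - 1)) * l) = y ^ r := by
      rw [← Real.rpow_add hy]; congr 1; linear_combination -hlD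
    calc B ^ (1 - l) * (x ^ (-(κ₂+1) * (1 - l)) * y ^ ((r + q) * (1 - l)))
          * (η₂ ^ l * (x ^ ((κ₂ + -(κ₂+1)) * l) * y ^ ((r + (θ₂ - 1)) * l)))
        = (B ^ (1 - l) * η₂ ^ l) * ((x ^ (-(κ₂+1) * (1 - l)) * x ^ ((κ₂ + -(κ₂+1)) * l))
            * (y ^ ((r + q) * (1 - l)) * y ^ ((r + (θ₂ - 1)) * l))) := by ring
      _ = K₁ * (x ^ (l * κ₂ + -(κ₂+1)) * y ^ r) := by rw [ex, ey, ← hK₁def]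
  have hG₂ : T1 ^ (1 - m) * T2 ^ m = K₂ * (x ^ (m * κ₂ + -(κ₂+1)) * y ^ (r + s)) := by
    rw [hT1def, hT2def, rpow_comb hx hy hB.le, rpow_comb hx hy hη₂.le]
    have ex : x ^ (-(κ₂+1) * (1 - m)) * x ^ ((κ₂ + -(κ₂+1)) * m) = x ^ (m * κ₂ + -(κ₂+1)) := by
      rw [← Real.rpow_add hx]; congr 1; ring
    have ey : y ^ ((r + q) * (1 - m)) * y ^ ((r + (θ₂ - 1)) * m) = y ^ (r + s) := by
      rw [← Real.rpow_add hy]; congr 1; rw [hsdef]; ring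
    calc B ^ (1 - m) * (x ^ (-(κ₂+1) * (1 - m)) * y ^ ((r + q) * (1 - m)))
          * (η₂ ^ m * (x ^ ((κ₂ + -(κ₂+1)) * m) * y ^ ((r + (θ₂ - 1)) * m)))
        = (B ^ (1 - m) * η₂ ^ m) * ((x ^ (-(κ₂+1) * (1 - m)) * x ^ ((κ₂ + -(κ₂+1)) * m))
            * (y ^ ((r + q) * (1 - m)) * y ^ ((r + (θ₂ - 1)) * m))) := by ring
      _ = K₂ * (x ^ (m * κ₂ + -(κ₂+1)) * y ^ (r + s)) := by rw [ex, ey, ← hK₂def]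
  have hgm₁ : T1 ^ (1 - l) * T2 ^ l ≤ (1 - l) * T1 + l * T2 :=
    Real.geom_mean_le_arith_mean2_weighted (by linarith only [hl1]) hl0 hT1pos hT2pos (by ring)
  have hgm₂ : T1 ^ (1 - m) * T2 ^ m ≤ (1 - m) * T1 + m * T2 :=
    Real.geom_mean_le_arith_mean2_weighted (by linarith only [hm1]) hm0 hT1pos hT2pos (by ring)
  -- bound on the first negative term
  have hN₁ : (A * β) * (x ^ (p + -(κ₂+1)) * y ^ r) ≤ (T1 + T2) / 4 := by
    have hsplit : x ^ (p + -(κ₂+1)) = x ^ e₁ * x ^ (l * κ₂ + -(κ₂+1)) := by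
      rw [← Real.rpow_add hx]; congr 1; rw [he₁def]; ring
    have hxe : x ^ e₁ ≤ ε ^ e₁ := Real.rpow_le_rpow hx.le hxε.le he₁.le
    have step : (A * β) * (x ^ (p + -(κ₂+1)) * y ^ r)
        ≤ (K₁ / 4) * (x ^ (l * κ₂ + -(κ₂+1)) * y ^ r) := by
      rw [hsplit, show (A * β) * (x ^ e₁ * x ^ (l * κ₂ + -(κ₂+1)) * y ^ r)
        = (A * β * x ^ e₁) * (x ^ (l * κ₂ + -(κ₂+1)) * y ^ r) by ring]
      refine mul_le_mul_of_nonneg_right ?_ (by positivity)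
      calc A * β * x ^ e₁ ≤ A * β * ε ^ e₁ := mul_le_mul_of_nonneg_left hxe hAβ
        _ ≤ K₁ / 4 := hbound₁
    calc (A * β) * (x ^ (p + -(κ₂+1)) * y ^ r)
        ≤ (K₁ / 4) * (x ^ (l * κ₂ + -(κ₂+1)) * y ^ r) := step
      _ = (T1 ^ (1 - l) * T2 ^ l) / 4 := by rw [hG₁]; ring
      _ ≤ ((1 - l) * T1 + l * T2) / 4 := by linarith only [hgm₁]
      _ ≤ (T1 + T2) / 4 := by
          linarith only [mul_nonneg hl0 hT1pos, mul_nonneg (sub_nonneg.2 hl1) hT2pos]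
  -- bound on the second negative term
  have hN₂ : (η₁ * β) * (x ^ ((θ₁ - 1) + -(κ₂+1)) * y ^ (r + κ₁)) ≤ (T1 + T2) / 4 := by
    have hsx : x ^ ((θ₁ - 1) + -(κ₂+1)) = x ^ t * x ^ (m * κ₂ + -(κ₂+1)) := by
      rw [← Real.rpow_add hx]; congr 1; rw [htdef]; ring
    have hsy : y ^ (r + κ₁) = y ^ (κ₁ - s) * y ^ (r + s) := by
      rw [← Real.rpow_add hy]; congr 1; ring
    have hxe : x ^ t ≤ ε ^ t := Real.rpow_le_rpow hx.le hxε.le ht0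
    have hye : y ^ (κ₁ - s) ≤ ε ^ (κ₁ - s) := Real.rpow_le_rpow hy.le hyε.le hκs
    have hεe : ε ^ t * ε ^ (κ₁ - s) = ε ^ e₂ := by
      rw [← Real.rpow_add hε0, he₂def]
    have step : (η₁ * β) * (x ^ ((θ₁ - 1) + -(κ₂+1)) * y ^ (r + κ₁))
        ≤ (K₂ / 4) * (x ^ (m * κ₂ + -(κ₂+1)) * y ^ (r + s)) := by
      rw [hsx, hsy, show (η₁ * β) * (x ^ t * x ^ (m * κ₂ + -(κ₂+1))
          * (y ^ (κ₁ - s) * y ^ (r + s)))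
        = (η₁ * β * (x ^ t * y ^ (κ₁ - s))) * (x ^ (m * κ₂ + -(κ₂+1)) * y ^ (r + s)) by ring]
      refine mul_le_mul_of_nonneg_right ?_ (by positivity)
      calc η₁ * β * (x ^ t * y ^ (κ₁ - s))
          ≤ η₁ * β * (ε ^ t * ε ^ (κ₁ - s)) := by
            refine mul_le_mul_of_nonneg_left ?_ (by positivity)
            exact mul_le_mul hxe hye (by positivity) (by positivity)
        _ = η₁ * β * ε ^ e₂ := by rw [hεe]
        _ ≤ K₂ / 4 := hbound₂
    calc (η₁ * β) * (x ^ ((θ₁ - 1) + -(κ₂+1)) * y ^ (r + κ₁))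
        ≤ (K₂ / 4) * (x ^ (m * κ₂ + -(κ₂+1)) * y ^ (r + s)) := step
      _ = (T1 ^ (1 - m) * T2 ^ m) / 4 := by rw [hG₂]; ring
      _ ≤ ((1 - m) * T1 + m * T2) / 4 := by linarith only [hgm₂]
      _ ≤ (T1 + T2) / 4 := by
          linarith only [mul_nonneg hm0 hT1pos, mul_nonneg (sub_nonneg.2 hm1) hT2pos]
  linarith only [hN₁, hN₂, hT2η, hT1pos]
end

section
/- Assume θ₁ − 1 > κ₂(q − κ₁)/(q + 1 − θ₂), p = q = 0 and b/a > κ₂/(1 − θ₂). Then there exist constants r, ε ∈ (0,1), β > 0 and c₀ > 0 such that H(x,y) ≥ c₀ for all x, y with 0 < x, y < ε. -/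
open Real

/-- Lemma 3.13 (case (iiib)): under the stated conditions there exist constants
`r, ε ∈ (0,1)`, `β > 0` and `c₀ > 0` such that `H(x,y) ≥ c₀` for all `0 < x, y < ε`,
where, writing `u := x^(−β) y`,
`H(x,y) := b(r) u^r y^q + η₂ u^r y^(θ₂−1) x^(κ₂) − a(r) β u^r x^p
  − η₁ β u^r x^(θ₁−1) y^(κ₁)`,
with `a(r)`, `b(r)` the `r`-dependent coefficients built from the Gamma function,
and `p, q, a, b` the minimal exponents and associated coefficients. -/
theorem H_lower_bound_case_iiib (α₁ α₂ a₁ a₂ a₃ b₁ b₂ b₃ p₁ p₂ p₃ q₁ q₂ q₃ η₁ η₂ κ₁ κ₂ θ₁ θ₂ p q a b : ℝ)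
    (hα₁ : 1 < α₁) (hα₁' : α₁ < 2) (hα₂ : 1 < α₂) (hα₂' : α₂ < 2)
    (ha₁ : 0 ≤ a₁) (ha₂ : 0 ≤ a₂) (ha₃ : 0 ≤ a₃)
    (hb₁ : 0 ≤ b₁) (hb₂ : 0 ≤ b₂) (hb₃ : 0 ≤ b₃)
    (ha₂₃ : 0 < a₂ + a₃) (hb₂₃ : 0 < b₂ + b₃)
    (hp₁ : 0 ≤ p₁) (hp₂ : 0 ≤ p₂) (hp₃ : 0 ≤ p₃)
    (hq₁ : 0 ≤ q₁) (hq₂ : 0 ≤ q₂) (hq₃ : 0 ≤ q₃)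
    (hη₁ : 0 < η₁) (hη₂ : 0 < η₂) (hκ₁ : 0 < κ₁) (hκ₂ : 0 < κ₂)
    (hθ₁ : 1 ≤ θ₁) (hθ₂ : 0 ≤ θ₂) (hθ₂' : θ₂ < 1)
    (hpmem : (a₁ ≠ 0 ∧ p = p₁) ∨ (a₂ ≠ 0 ∧ p = p₂) ∨ (a₃ ≠ 0 ∧ p = p₃))
    (hpmin : (a₁ ≠ 0 → p ≤ p₁) ∧ (a₂ ≠ 0 → p ≤ p₂) ∧ (a₃ ≠ 0 → p ≤ p₃))
    (hqmem : (b₁ ≠ 0 ∧ q = q₁) ∨ (b₂ ≠ 0 ∧ q = q₂) ∨ (b₃ ≠ 0 ∧ q = q₃))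
    (hqmin : (b₁ ≠ 0 → q ≤ q₁) ∧ (b₂ ≠ 0 → q ≤ q₂) ∧ (b₃ ≠ 0 → q ≤ q₃))
    (hadef : a = (if p₁ = p then a₁ else 0) + (if p₂ = p then a₂ else 0)
        + (if p₃ = p then a₃ else 0))
    (hbdef : b = (if q₁ = q then b₁ else 0) + (if q₂ = q then b₂ else 0)
        + (if q₃ = q then b₃ else 0))
    (hcond₁ : θ₁ - 1 > κ₂ * (q - κ₁) / (q + 1 - θ₂)) (hp0 : p = 0) (hq0 : q = 0) (hcond₂ : b / a > κ₂ / (1 - θ₂)) :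
    ∃ r ε β c₀ : ℝ, 0 < r ∧ r < 1 ∧ 0 < ε ∧ ε < 1 ∧ 0 < β ∧ 0 < c₀ ∧
      ∀ x y : ℝ, 0 < x → x < ε → 0 < y → y < ε →
        ((if q₁ = q then b₁ else 0) + (if q₂ = q then b₂ * (1 - r) else 0)
              + (if q₃ = q then b₃ * ((1 - r) * Real.Gamma (α₂ - r)
                  / (Real.Gamma α₂ * Real.Gamma (2 - r))) else 0))
            * (x ^ (-β) * y) ^ r * y ^ q
          + η₂ * (x ^ (-β) * y) ^ r * y ^ (θ₂ - 1) * x ^ κ₂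
          - ((if p₁ = p then a₁ else 0) + (if p₂ = p then a₂ * (r * β + 1) else 0)
              + (if p₃ = p then a₃ * ((r * β + 1) * Real.Gamma (α₁ + r * β)
                  / (Real.Gamma α₁ * Real.Gamma (2 + r * β))) else 0))
            * β * (x ^ (-β) * y) ^ r * x ^ p
          - η₁ * β * (x ^ (-β) * y) ^ r * x ^ (θ₁ - 1) * y ^ κ₁
        ≥ c₀ := by
  subst hp0 hq0
  have hs : 0 < 1 - θ₂ := by linarith
  set β : ℝ := κ₂ / (1 - θ₂) with hβdef
  have hβ : 0 < β := div_pos hκ₂ hs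
  have hβs : β * (1 - θ₂) = κ₂ := div_mul_cancel₀ _ hs.ne'
  -- positivity of a and b
  have ht : ∀ (c e : ℝ) (P : Prop) [Decidable P], 0 ≤ c → 0 ≤ (if P then c else (0:ℝ)) := by
    intro c e P _ hc; split_ifs <;> simp [hc]
  have ha_pos : 0 < a := by
    rw [hadef]
    have h1 := ht a₁ 0 (p₁ = 0) ha₁
    have h2 := ht a₂ 0 (p₂ = 0) ha₂
    have h3 := ht a₃ 0 (p₃ = 0) ha₃
    rcases hpmem with ⟨h, hp⟩ | ⟨h, hp⟩ | ⟨h, hp⟩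
    · rw [if_pos hp.symm]; have := ha₁.lt_of_ne (Ne.symm h); linarith
    · rw [if_pos (c := p₂ = 0) hp.symm]; have := ha₂.lt_of_ne (Ne.symm h); linarith
    · rw [if_pos (c := p₃ = 0) hp.symm]; have := ha₃.lt_of_ne (Ne.symm h); linarith
  have hba : β * a < b := by
    have := (lt_div_iff₀ ha_pos).mp hcond₂
    linarith
  have hΓ1 : (0:ℝ) < Real.Gamma α₁ := Real.Gamma_pos_of_pos (by linarith)
  have hΓ2 : (0:ℝ) < Real.Gamma α₂ := Real.Gamma_pos_of_pos (by linarith)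
  -- the function F
  set F : ℝ → ℝ := fun r =>
    ((if q₁ = 0 then b₁ else 0) + (if q₂ = 0 then b₂ * (1 - r) else 0)
        + (if q₃ = 0 then b₃ * ((1 - r) * Real.Gamma (α₂ - r)
            / (Real.Gamma α₂ * Real.Gamma (2 - r))) else 0))
      - β * ((if p₁ = 0 then a₁ else 0) + (if p₂ = 0 then a₂ * (r * β + 1) else 0)
        + (if p₃ = 0 then a₃ * ((r * β + 1) * Real.Gamma (α₁ + r * β)
            / (Real.Gamma α₁ * Real.Gamma (2 + r * β))) else 0)) with hFdef
  have hF0 : F 0 = b - β * a := by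
    simp only [hFdef]
    norm_num [Real.Gamma_two]
    rw [hadef, hbdef]
    split_ifs <;> field_simp <;> ring
  have hF0pos : 0 < F 0 := by rw [hF0]; linarith
  -- continuity of F at 0
  have hΓc2 : ContinuousAt (fun r : ℝ => Real.Gamma (α₂ - r)) 0 := by
    have h1 : ContinuousAt Real.Gamma ((fun r : ℝ => α₂ - r) 0) := by
      apply (Real.differentiableAt_Gamma _).continuousAt
      intro m
      have : (0:ℝ) ≤ m := m.cast_nonneg
      simp only [sub_zero]
      intro h; rw [h] at hα₂; linarith
    exact h1.comp ((continuous_const.sub continuous_id).continuousAt)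
  have hΓc2' : ContinuousAt (fun r : ℝ => Real.Gamma (2 - r)) 0 := by
    have h1 : ContinuousAt Real.Gamma ((fun r : ℝ => 2 - r) 0) := by
      apply (Real.differentiableAt_Gamma _).continuousAt
      intro m
      have : (0:ℝ) ≤ m := m.cast_nonneg
      simp only [sub_zero]
      intro h; linarith
    exact h1.comp ((continuous_const.sub continuous_id).continuousAt)
  have hΓc1 : ContinuousAt (fun r : ℝ => Real.Gamma (α₁ + r * β)) 0 := by
    have h1 : ContinuousAt Real.Gamma ((fun r : ℝ => α₁ + r * β) 0) := by
      apply (Real.differentiableAt_Gamma _).continuousAt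
      intro m
      have : (0:ℝ) ≤ m := m.cast_nonneg
      simp only [zero_mul, add_zero]
      intro h; rw [h] at hα₁; linarith
    exact ContinuousAt.comp (g := Real.Gamma) (f := fun r : ℝ => α₁ + r * β) h1
      (by fun_prop)
  have hΓc1' : ContinuousAt (fun r : ℝ => Real.Gamma (2 + r * β)) 0 := by
    have h1 : ContinuousAt Real.Gamma ((fun r : ℝ => 2 + r * β) 0) := by
      apply (Real.differentiableAt_Gamma _).continuousAt
      intro m
      have : (0:ℝ) ≤ m := m.cast_nonneg
      simp only [zero_mul, add_zero]
      intro h; linarith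
    exact ContinuousAt.comp (g := Real.Gamma) (f := fun r : ℝ => 2 + r * β) h1
      (by fun_prop)
  have hne2 : Real.Gamma α₂ * Real.Gamma (2 - (0:ℝ)) ≠ 0 := by
    rw [sub_zero]
    positivity
  have hne1 : Real.Gamma α₁ * Real.Gamma (2 + (0:ℝ) * β) ≠ 0 := by
    rw [zero_mul, add_zero]
    positivity
  have hFc : ContinuousAt F 0 := by
    apply ContinuousAt.sub
    · apply ContinuousAt.add
      apply ContinuousAt.add
      · exact continuousAt_const
      · by_cases h : q₂ = 0 <;> simp only [h, if_true, if_false]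
        · exact (continuous_const.mul (continuous_const.sub continuous_id)).continuousAt
        · exact continuousAt_const
      · by_cases h : q₃ = 0 <;> simp only [h, if_true, if_false]
        · apply ContinuousAt.mul continuousAt_const
          apply ContinuousAt.div
          · exact ((continuous_const.sub continuous_id).continuousAt).mul hΓc2
          · exact continuousAt_const.mul hΓc2'
          · exact hne2
        · exact continuousAt_const
    · apply ContinuousAt.mul continuousAt_const
      apply ContinuousAt.add
      apply ContinuousAt.add
      · exact continuousAt_const
      · by_cases h : p₂ = 0 <;> simp only [h, if_true, if_false]
        · exact (continuous_const.mul ((continuous_id.mul continuous_const).add continuous_const)).continuousAt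
        · exact continuousAt_const
      · by_cases h : p₃ = 0 <;> simp only [h, if_true, if_false]
        · apply ContinuousAt.mul continuousAt_const
          apply ContinuousAt.div
          · exact (((continuous_id.mul continuous_const).add continuous_const).continuousAt).mul hΓc1
          · exact continuousAt_const.mul hΓc1'
          · exact hne1
        · exact continuousAt_const
  -- choose r
  have hev : ∀ᶠ r in nhds (0:ℝ), 0 < F r := hFc.eventually (eventually_gt_nhds hF0pos)
  have hmem : Set.Ioo (0:ℝ) (min (1 - θ₂) 1) ∈ nhdsWithin (0:ℝ) (Set.Ioi 0) :=
    Ioo_mem_nhdsGT_of_mem ⟨le_refl _, by positivity⟩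
  obtain ⟨r, hrF, hr0, hrm⟩ :=
    ((hev.filter_mono nhdsWithin_le_nhds).and (Filter.eventually_of_mem hmem fun r hr => hr)).exists
  set C : ℝ := F r with hCdef
  have hC : 0 < C := hrF
  have hr1 : r < 1 := lt_of_lt_of_le hrm (min_le_right _ _)
  have hrθ : r < 1 - θ₂ := lt_of_lt_of_le hrm (min_le_left _ _)
  -- choose ε
  set e : ℝ := (C / (2 * η₁ * β)) ^ (1 / κ₁) with hedef
  have hepos : 0 < e := Real.rpow_pos_of_pos (by positivity) _
  set ε : ℝ := min (1/2) e with hεdef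
  have hεpos : 0 < ε := lt_min (by norm_num) hepos
  have hε1 : ε < 1 := lt_of_le_of_lt (min_le_left _ _) (by norm_num)
  refine ⟨r, ε, β, min (C/2) η₂, hr0, hr1, hεpos, hε1, hβ, lt_min (by positivity) hη₂, ?_⟩
  intro x y hx hxε hy hyε
  have hx1 : x < 1 := lt_trans hxε hε1
  have hy1 : y < 1 := lt_trans hyε hε1
  set u : ℝ := x ^ (-β) * y with hudef
  have hu : 0 < u := mul_pos (Real.rpow_pos_of_pos hx _) hy
  have hur : 0 < u ^ r := Real.rpow_pos_of_pos hu _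
  rw [Real.rpow_zero, Real.rpow_zero]
  set B : ℝ := (if q₁ = 0 then b₁ else 0) + (if q₂ = 0 then b₂ * (1 - r) else 0)
      + (if q₃ = 0 then b₃ * ((1 - r) * Real.Gamma (α₂ - r)
          / (Real.Gamma α₂ * Real.Gamma (2 - r))) else 0) with hBdef
  set A : ℝ := (if p₁ = 0 then a₁ else 0) + (if p₂ = 0 then a₂ * (r * β + 1) else 0)
      + (if p₃ = 0 then a₃ * ((r * β + 1) * Real.Gamma (α₁ + r * β)
          / (Real.Gamma α₁ * Real.Gamma (2 + r * β))) else 0) with hAdef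
  have hBA : B - β * A = C := by rw [hCdef, hFdef]
  -- bound on the η₁ term
  have hT4 : η₁ * β * u ^ r * x ^ (θ₁ - 1) * y ^ κ₁ ≤ C / 2 * u ^ r := by
    have hxb : x ^ (θ₁ - 1) ≤ 1 := Real.rpow_le_one hx.le hx1.le (by linarith)
    have hyb : y ^ κ₁ ≤ C / (2 * η₁ * β) := by
      have h1 : y ^ κ₁ ≤ e ^ κ₁ :=
        Real.rpow_le_rpow hy.le (le_of_lt (lt_of_lt_of_le hyε (min_le_right _ _))) hκ₁.le
      have h2 : e ^ κ₁ = C / (2 * η₁ * β) := by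
        rw [hedef, ← Real.rpow_mul (by positivity), one_div, inv_mul_cancel₀ hκ₁.ne',
          Real.rpow_one]
      rw [h2] at h1
      exact h1
    calc η₁ * β * u ^ r * x ^ (θ₁ - 1) * y ^ κ₁
        ≤ η₁ * β * u ^ r * 1 * (C / (2 * η₁ * β)) := by
          apply mul_le_mul _ hyb (by positivity) (by positivity)
          exact mul_le_mul_of_nonneg_left hxb (by positivity)
      _ = C / 2 * u ^ r := by field_simp
  have hT2 : 0 ≤ η₂ * u ^ r * y ^ (θ₂ - 1) * x ^ κ₂ := by positivity
  -- case split
  have h3' : B * u ^ r * 1 - A * β * u ^ r * 1 = C * u ^ r := by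
    rw [← hBA]; ring
  have h5 : C * u ^ r = C / 2 * u ^ r + C / 2 * u ^ r := by ring
  by_cases hu1 : 1 ≤ u
  · have h1 : (1:ℝ) ≤ u ^ r := Real.one_le_rpow hu1 hr0.le
    have h2 : C / 2 ≤ C / 2 * u ^ r := by
      have h := mul_le_mul_of_nonneg_left h1 (by positivity : (0:ℝ) ≤ C / 2)
      simpa using h
    linarith only [h3', h5, hT4, hT2, h2, min_le_left (C/2) η₂]
  · push_neg at hu1
    have hxβ : 0 < x ^ β := Real.rpow_pos_of_pos hx _
    have hyxβ : y ≤ x ^ β := by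
      have h1 : x ^ β * u < x ^ β * 1 := mul_lt_mul_of_pos_left hu1 hxβ
      have h2 : x ^ β * u = y := by
        rw [hudef, ← mul_assoc, ← Real.rpow_add hx, add_neg_cancel, Real.rpow_zero, one_mul]
      rw [h2, mul_one] at h1
      exact h1.le
    have hT2' : η₂ ≤ η₂ * u ^ r * y ^ (θ₂ - 1) * x ^ κ₂ := by
      have hz : r + (θ₂ - 1) ≤ 0 := by linarith
      have h1 : (x ^ β) ^ (r + (θ₂ - 1)) ≤ y ^ (r + (θ₂ - 1)) :=
        Real.rpow_le_rpow_of_nonpos hy hyxβ hz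
      have h2 : u ^ r = x ^ (-β * r) * y ^ r := by
        rw [hudef, Real.mul_rpow (Real.rpow_nonneg hx.le _) hy.le, ← Real.rpow_mul hx.le]
      have h3 : η₂ * u ^ r * y ^ (θ₂ - 1) * x ^ κ₂
          = η₂ * (x ^ (-β * r + κ₂)) * y ^ (r + (θ₂ - 1)) := by
        rw [h2, Real.rpow_add hx, Real.rpow_add hy]
        ring
      have h4 : (x ^ β) ^ (r + (θ₂ - 1)) = x ^ (β * (r + (θ₂ - 1))) := by
        rw [← Real.rpow_mul hx.le]
      have h5 : x ^ (-β * r + κ₂) * x ^ (β * (r + (θ₂ - 1))) = 1 := by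
        rw [← Real.rpow_add hx]
        have : -β * r + κ₂ + β * (r + (θ₂ - 1)) = 0 := by
          have : β * (1 - θ₂) = κ₂ := hβs
          linear_combination -hβs
        rw [this, Real.rpow_zero]
      have h6 : η₂ * (x ^ (-β * r + κ₂)) * x ^ (β * (r + (θ₂ - 1))) = η₂ := by
        rw [mul_assoc, h5, mul_one]
      calc η₂ = η₂ * (x ^ (-β * r + κ₂)) * (x ^ β) ^ (r + (θ₂ - 1)) := by rw [h4]; exact h6.symm
        _ ≤ η₂ * (x ^ (-β * r + κ₂)) * y ^ (r + (θ₂ - 1)) := by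
            apply mul_le_mul_of_nonneg_left h1 (by positivity)
        _ = η₂ * u ^ r * y ^ (θ₂ - 1) * x ^ κ₂ := h3.symm
    have h4 : 0 ≤ C / 2 * u ^ r := by positivity
    linarith only [h3', h5, hT4, hT2', h4, min_le_right (C/2) η₂]
end
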